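/- Define H_{i,n}(s) := (1 - F_{i,n}(s)) ∏_{j≠i, 0≤j≤n-1} F_{j,n}(0) for fractional linear F_k with means m_k. Then for any 0 ≤ i ≤ n-1 and s ∈ [0,1): H_{i,n}(s) = [a_i / (a_n(1-s)^{-1} + b_n - b_i)] · [(a_n + b_n - b_i)/(a_n + b_n - b_{i+1})] · (a_n / b_{n+1}), where a_k = e^{-S_k}, b_m = ∑_{k=0}^{m-1} e^{-S_k}, S_k = ∑_{j≤k} log m_j. -/

import Mathlib

/-- The fractional linear (geometric) probability generating function with mean `exp x`. -/
noncomputable def geomPGF (x s : ℝ) : ℝ := (1 + Real.exp x * (1 - s))⁻¹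

/-- The associated random walk: `walk X k = log m_1 + ... + log m_k` where `X j = log m_j`. -/
noncomputable def walk (X : ℕ → ℝ) (k : ℕ) : ℝ := ∑ j ∈ Finset.range k, X (j + 1)

/-- Forward composition `F_{i,n}(s) = F_{i+1}(F_{i+2}(... F_n(s) ...))`, with `F_{n,n}(s) = s`,
where `F_k` is the fractional linear pgf with mean `m_k = exp (X k)`. -/
noncomputable def Fcomp (X : ℕ → ℝ) (i n : ℕ) (s : ℝ) : ℝ :=
  (List.range (n - i)).foldr (fun k t => geomPGF (X (i + k + 1)) t) s

/-- `a_k = e^{-S_k}`. -/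
noncomputable def aRW (X : ℕ → ℝ) (k : ℕ) : ℝ := Real.exp (-(walk X k))

/-- `b_m = ∑_{k=0}^{m-1} e^{-S_k}` (so `b_0 = 0`). -/
noncomputable def bRW (X : ℕ → ℝ) (m : ℕ) : ℝ := ∑ k ∈ Finset.range m, Real.exp (-(walk X k))

/-- `H_{i,n}(s) := (1 - F_{i,n}(s)) ∏_{j ≠ i, 0 ≤ j ≤ n-1} F_{j,n}(0)`. -/
noncomputable def Hfun (X : ℕ → ℝ) (i n : ℕ) (s : ℝ) : ℝ :=
  (1 - Fcomp X i n s) * ∏ j ∈ (Finset.range n).erase i, Fcomp X j n 0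

lemma walk_succ (X : ℕ → ℝ) (k : ℕ) : walk X (k + 1) = walk X k + X (k + 1) :=
  Finset.sum_range_succ _ _

lemma aRW_pos (X : ℕ → ℝ) (k : ℕ) : 0 < aRW X k := Real.exp_pos _

lemma bRW_succ (X : ℕ → ℝ) (m : ℕ) : bRW X (m + 1) = bRW X m + aRW X m :=
  Finset.sum_range_succ _ _

lemma bRW_mono (X : ℕ → ℝ) {i n : ℕ} (h : i ≤ n) : bRW X i ≤ bRW X n := by
  unfold bRW
  exact Finset.sum_le_sum_of_subset_of_nonneg (Finset.range_subset_range.2 h)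
    (fun _ _ _ => (Real.exp_pos _).le)

lemma Fcomp_self (X : ℕ → ℝ) (n : ℕ) (s : ℝ) : Fcomp X n n s = s := by
  simp [Fcomp]

lemma Fcomp_rec (X : ℕ → ℝ) {i n : ℕ} (h : i < n) (s : ℝ) :
    Fcomp X i n s = geomPGF (X (i + 1)) (Fcomp X (i + 1) n s) := by
  unfold Fcomp
  obtain ⟨m, hm⟩ : ∃ m, n - i = m + 1 := ⟨n - i - 1, by omega⟩
  have hm' : n - (i + 1) = m := by omega
  rw [hm, hm', List.range_succ_eq_map, List.foldr_cons, List.foldr_map]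
  have hfe : (fun (x : ℕ) (y : ℝ) => geomPGF (X (i + Nat.succ x + 1)) y)
      = (fun k t => geomPGF (X (i + 1 + k + 1)) t) := by
    funext x y
    congr 2
    omega
  simp only [hfe, Nat.add_zero]

/-- The denominator `a_n (1-s)⁻¹ + b_n - b_i`. -/
noncomputable def Dfun (X : ℕ → ℝ) (i n : ℕ) (s : ℝ) : ℝ :=
  aRW X n * (1 - s)⁻¹ + bRW X n - bRW X i

lemma Dfun_pos (X : ℕ → ℝ) {i n : ℕ} (h : i ≤ n) {s : ℝ} (hs : s < 1) :
    0 < Dfun X i n s := by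
  have h1 : 0 < aRW X n * (1 - s)⁻¹ :=
    mul_pos (aRW_pos X n) (inv_pos.2 (by linarith))
  have h2 := bRW_mono X h
  unfold Dfun; linarith

lemma Dfun_succ (X : ℕ → ℝ) (i n : ℕ) (s : ℝ) :
    Dfun X i n s = Dfun X (i + 1) n s + aRW X i := by
  unfold Dfun
  rw [bRW_succ]
  unfold aRW
  ring

lemma Fcomp_formula (X : ℕ → ℝ) {s : ℝ} (hs : s < 1) :
    ∀ k i n : ℕ, i + k = n → Fcomp X i n s = 1 - aRW X i / Dfun X i n s := by
  intro k
  induction k with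
  | zero =>
    intro i n hin
    have hni : n = i := by omega
    subst hni
    rw [Fcomp_self]
    have hD : Dfun X n n s = aRW X n * (1 - s)⁻¹ := by unfold Dfun; ring
    rw [hD]
    have ha := aRW_pos X n
    have h1 : (1 : ℝ) - s ≠ 0 := by linarith
    field_simp
    ring
  | succ k ih =>
    intro i n hin
    have hlt : i < n := by omega
    have hrec := ih (i + 1) n (by omega)
    rw [Fcomp_rec X hlt, hrec]
    unfold geomPGF
    have hexp : Real.exp (X (i + 1)) * aRW X (i + 1) = aRW X i := by
      unfold aRW
      rw [← Real.exp_add, walk_succ]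
      ring_nf
    have hD1 : 0 < Dfun X (i + 1) n s := Dfun_pos X (by omega) hs
    have hD0 : 0 < Dfun X i n s := Dfun_pos X (by omega) hs
    have hsucc := Dfun_succ X i n s
    have hstep : 1 - (1 - aRW X (i + 1) / Dfun X (i + 1) n s)
        = aRW X (i + 1) / Dfun X (i + 1) n s := by ring
    rw [hstep, ← mul_div_assoc, hexp, hsucc]
    have ha := aRW_pos X i
    have hsum : (0:ℝ) < Dfun X (i + 1) n s + aRW X i := by linarith
    field_simp
    ring

lemma Efun_pos (X : ℕ → ℝ) {j n : ℕ} (h : j ≤ n) :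
    0 < aRW X n + bRW X n - bRW X j := by
  have := bRW_mono X h
  have := aRW_pos X n
  linarith

/-- `F_{j,n}(0) = E_{j+1}/E_j`. -/
lemma Fcomp_zero_eq (X : ℕ → ℝ) {j n : ℕ} (h : j ≤ n) :
    Fcomp X j n 0 = (aRW X n + bRW X n - bRW X (j + 1)) / (aRW X n + bRW X n - bRW X j) := by
  obtain ⟨k, hk⟩ : ∃ k, j + k = n := ⟨n - j, by omega⟩
  rw [Fcomp_formula X (by norm_num) k j n hk]
  have hD : Dfun X j n 0 = aRW X n + bRW X n - bRW X j := by unfold Dfun; ring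
  have hE0 : 0 < aRW X n + bRW X n - bRW X j := Efun_pos X h
  rw [hD, bRW_succ]
  have : aRW X j = Real.exp (-(walk X j)) := rfl
  field_simp
  ring

lemma prod_Fcomp_zero (X : ℕ → ℝ) (n : ℕ) :
    ∀ m, m ≤ n → ∏ j ∈ Finset.range m, Fcomp X j n 0 =
      (aRW X n + bRW X n - bRW X m) / (aRW X n + bRW X n - bRW X 0) := by
  intro m
  induction m with
  | zero =>
    intro _
    have h0 := Efun_pos X (Nat.zero_le n)
    simp [div_self h0.ne']
  | succ m ih =>
    intro hm
    rw [Finset.prod_range_succ, ih (by omega), Fcomp_zero_eq X (by omega)]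
    have h0 : 0 < aRW X n + bRW X n - bRW X 0 := Efun_pos X (by omega)
    have h1 : 0 < aRW X n + bRW X n - bRW X m := Efun_pos X (by omega)
    field_simp

/-- Lemma 1 of the paper: for `0 ≤ i ≤ n-1` and `s ∈ [0,1)`,
`H_{i,n}(s) = [a_i/(a_n (1-s)^{-1} + b_n - b_i)]·[(a_n+b_n-b_i)/(a_n+b_n-b_{i+1})]·(a_n/b_{n+1})`. -/
theorem Hfun_eq (X : ℕ → ℝ) (i n : ℕ) (hin : i < n) (s : ℝ)
    (hs : s ∈ Set.Ico (0 : ℝ) 1) :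
    Hfun X i n s =
      (aRW X i / (aRW X n * (1 - s)⁻¹ + bRW X n - bRW X i)) *
        ((aRW X n + bRW X n - bRW X i) / (aRW X n + bRW X n - bRW X (i + 1))) *
        (aRW X n / bRW X (n + 1)) := by
  obtain ⟨hs0, hs1⟩ := hs
  unfold Hfun
  -- first factor
  obtain ⟨k, hk⟩ : ∃ k, i + k = n := ⟨n - i, by omega⟩
  rw [Fcomp_formula X hs1 k i n hk]
  -- the erased product
  have hFi0 : Fcomp X i n 0 ≠ 0 := by
    rw [Fcomp_zero_eq X hin.le]
    have h1 := Efun_pos X (show i + 1 ≤ n by omega)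
    have h0 := Efun_pos X (show i ≤ n by omega)
    positivity
  have hmem : i ∈ Finset.range n := Finset.mem_range.2 hin
  have herase : ∏ j ∈ (Finset.range n).erase i, Fcomp X j n 0 =
      (∏ j ∈ Finset.range n, Fcomp X j n 0) / Fcomp X i n 0 := by
    rw [← Finset.prod_erase_mul _ _ hmem]
    field_simp
  rw [herase, prod_Fcomp_zero X n n le_rfl, Fcomp_zero_eq X hin.le]
  have hb0 : bRW X 0 = 0 := by simp [bRW]
  have hbn1 : bRW X (n + 1) = bRW X n + aRW X n := bRW_succ X n
  have hEn : aRW X n + bRW X n - bRW X n = aRW X n := by ring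
  have h0 := Efun_pos X (show (0:ℕ) ≤ n by omega)
  have hi := Efun_pos X (show i ≤ n by omega)
  have hi1 := Efun_pos X (show i + 1 ≤ n by omega)
  have hD : Dfun X i n s = aRW X n * (1 - s)⁻¹ + bRW X n - bRW X i := rfl
  rw [hb0, hbn1, hD] at *
  have h1 : 1 - (1 - aRW X i / (aRW X n * (1 - s)⁻¹ + bRW X n - bRW X i))
      = aRW X i / (aRW X n * (1 - s)⁻¹ + bRW X n - bRW X i) := by ring
  rw [h1]
  have han := aRW_pos X n
  have hs' : (1:ℝ) - s ≠ 0 := by linarith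
  have hDp : 0 < aRW X n * (1 - s)⁻¹ + bRW X n - bRW X i := Dfun_pos X hin.le hs1
  have hbpos : 0 < bRW X n + aRW X n := by linarith
  field_simp
  ring
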